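/- arXiv:1501.06157 — 2 statements merged into one kernel-verified Lean document; each statement's English description precedes it below -/
import Mathlib

section
/- Let m0 ≥ 2, m1 ≥ m0, and let r solve the (m0,m1)-ODE r'' = α·r' - β·sin(2r) with lim_{x→∞} r(x) = (2ℓ+1)·π/2 for some integer ℓ and lim_{x→∞} r'(x) = 0. Then |r'(x)| ≤ √m1 for all x ≥ Z_β, where Z_β is the unique zero of β. -/
open Filter

noncomputable def artanh (x : ℝ) : ℝ := (1/2) * Real.log ((1 + x) / (1 - x))

lemma tanh_eq_aux (x : ℝ) : Real.tanh x = 1 - 2 / (Real.exp (2*x) + 1) := by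
  rw [Real.tanh_eq_sinh_div_cosh, Real.sinh_eq, Real.cosh_eq]
  have h1 := Real.exp_pos x
  have h2 := Real.exp_pos (-x)
  have h4 := Real.exp_pos (2*x)
  have h3 : Real.exp x * Real.exp (-x) = 1 := by rw [← Real.exp_add]; simp
  have hx : Real.exp (2*x) = Real.exp x * Real.exp x := by rw [← Real.exp_add]; ring_nf
  have hx' : Real.exp (x*2) = Real.exp x * Real.exp x := by rw [← Real.exp_add]; ring_nf
  field_simp
  nlinarith [h3, hx, hx']

lemma tanh_mono : Monotone Real.tanh := by
  intro a b hab
  rw [tanh_eq_aux, tanh_eq_aux]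
  have h1 : (0:ℝ) < Real.exp (2*a) + 1 := by positivity
  have h2 : Real.exp (2*a) + 1 ≤ Real.exp (2*b) + 1 := by
    have := Real.exp_le_exp.mpr (by linarith : 2*a ≤ 2*b); linarith
  gcongr

lemma my_hasDerivAt_tanh (x : ℝ) : HasDerivAt Real.tanh (1/(Real.cosh x)^2) x := by
  have h : Real.tanh = fun y => Real.sinh y / Real.cosh y := funext Real.tanh_eq_sinh_div_cosh
  rw [h]
  have hc := Real.cosh_pos (x := x)
  have := (Real.hasDerivAt_sinh x).div (Real.hasDerivAt_cosh x) (ne_of_gt hc)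
  refine this.congr_deriv ?_
  have h2 := Real.cosh_sq_sub_sinh_sq x
  rw [← h2]
  ring

lemma tendsto_tanh_atTop : Tendsto Real.tanh atTop (nhds 1) := by
  have h : Real.tanh = fun x => 1 - 2 / (Real.exp (2*x) + 1) := funext tanh_eq_aux
  rw [h]
  have h1 : Tendsto (fun x : ℝ => Real.exp (2*x) + 1) atTop atTop := by
    apply Filter.tendsto_atTop_add_const_right
    exact Real.tendsto_exp_atTop.comp (tendsto_id.const_mul_atTop two_pos)
  have h2 : Tendsto (fun x : ℝ => 2 / (Real.exp (2*x) + 1)) atTop (nhds 0) :=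
    Tendsto.div_atTop tendsto_const_nhds h1
  have := (tendsto_const_nhds (x := (1:ℝ)) (f := atTop)).sub h2
  simpa using this

lemma tanh_artanh' {y : ℝ} (h1 : -1 < y) (h2 : y < 1) :
    Real.tanh ((1/2) * Real.log ((1 + y) / (1 - y))) = y := by
  have hy1 : 0 < 1 + y := by linarith
  have hy2 : 0 < 1 - y := by linarith
  have hA : 0 < (1+y)/(1-y) := div_pos hy1 hy2
  have he : Real.exp (2 * ((1/2) * Real.log ((1+y)/(1-y)))) = (1+y)/(1-y) := by
    rw [show 2 * ((1/2) * Real.log ((1+y)/(1-y))) = Real.log ((1+y)/(1-y)) by ring,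
      Real.exp_log hA]
  rw [tanh_eq_aux, he]
  have hA1 : (0:ℝ) < (1+y)/(1-y) + 1 := by linarith
  field_simp
  ring


/-- If r solves the (m0,m1)-ODE with r(x) → (2ℓ+1)π/2 and r'(x) → 0 as x → ∞,
then |r'(x)| ≤ √m1 for all x ≥ Z_β, the unique zero of β. -/
theorem deriv_bound_right_of_Zbeta (m0 m1 : ℕ) (hm0 : 2 ≤ m0) (hm1 : m0 ≤ m1)
    (α β : ℝ → ℝ)
    (hα : ∀ x, α x = (1/2) * (((m0:ℝ) + m1 - 2) * Real.tanh x + m1 - m0))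
    (hβ : ∀ x, β x = (1/4) * (((m0:ℝ) + m1) * Real.tanh x + m1 - m0))
    (r r' : ℝ → ℝ)
    (hr : ∀ x, HasDerivAt r (r' x) x)
    (hr' : ∀ x, HasDerivAt r' (α x * r' x - β x * Real.sin (2 * r x)) x)
    (ℓ : ℤ)
    (hlim : Tendsto r atTop (nhds ((2 * (ℓ:ℝ) + 1) * Real.pi / 2)))
    (hlim' : Tendsto r' atTop (nhds 0)) :
    ∀ x : ℝ, artanh (((m0:ℝ) - m1) / ((m0:ℝ) + m1)) ≤ x →
      |r' x| ≤ Real.sqrt m1 := by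
  intro x hx
  set y : ℝ := ((m0:ℝ) - m1) / ((m0:ℝ) + m1) with hy
  have hm0R : (2:ℝ) ≤ (m0:ℝ) := by exact_mod_cast hm0
  have hm1R : (m0:ℝ) ≤ (m1:ℝ) := by exact_mod_cast hm1
  have hsum : (0:ℝ) < (m0:ℝ) + m1 := by linarith
  have hy1 : -1 < y := by
    rw [hy, neg_lt, ← neg_div, neg_sub, div_lt_one hsum]; linarith
  have hy2 : y < 1 := by rw [hy, div_lt_one hsum]; linarith
  have htZ : Real.tanh (artanh y) = y := tanh_artanh' hy1 hy2
  have htanh : ∀ z, artanh y ≤ z → y ≤ Real.tanh z := fun z hz => htZ ▸ tanh_mono hz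
  -- β nonneg on [Z, ∞)
  have hβ0 : ∀ z, artanh y ≤ z → 0 ≤ β z := by
    intro z hz
    rw [hβ]
    have h := htanh z hz
    have h' : (m0:ℝ) - m1 ≤ ((m0:ℝ) + m1) * Real.tanh z := by
      calc (m0:ℝ) - m1 = y * ((m0:ℝ) + m1) := by rw [hy]; field_simp
      _ ≤ Real.tanh z * ((m0:ℝ) + m1) := by
          apply mul_le_mul_of_nonneg_right h (le_of_lt hsum)
      _ = ((m0:ℝ) + m1) * Real.tanh z := mul_comm _ _
    linarith
  -- α nonneg on [Z, ∞)
  have hα0 : ∀ z, artanh y ≤ z → 0 ≤ α z := by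
    intro z hz
    rw [hα]
    have h := htanh z hz
    have h' : (m0:ℝ) - m1 ≤ ((m0:ℝ) + m1) * Real.tanh z := by
      calc (m0:ℝ) - m1 = y * ((m0:ℝ) + m1) := by rw [hy]; field_simp
      _ ≤ Real.tanh z * ((m0:ℝ) + m1) := mul_le_mul_of_nonneg_right h (le_of_lt hsum)
      _ = ((m0:ℝ) + m1) * Real.tanh z := mul_comm _ _
    rcases le_or_gt (Real.tanh z) 0 with ht | ht
    · nlinarith
    · nlinarith
  -- the energy function
  set W : ℝ → ℝ := fun z => (1/2) * (r' z)^2 + β z * (Real.sin (r z))^2 with hW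
  set W' : ℝ → ℝ := fun z =>
    α z * (r' z)^2 + (1/4)*((m0:ℝ)+(m1:ℝ)) * (1/(Real.cosh z)^2) * (Real.sin (r z))^2 with hW'
  have hβfun : β = fun t => (1/4) * (((m0:ℝ) + m1) * Real.tanh t + ((m1:ℝ) - m0)) :=
    funext fun t => by rw [hβ t]; ring
  have hβd : ∀ z, HasDerivAt β ((1/4)*((m0:ℝ)+(m1:ℝ)) * (1/(Real.cosh z)^2)) z := by
    intro z
    rw [hβfun]
    have := (((my_hasDerivAt_tanh z).const_mul ((m0:ℝ)+(m1:ℝ))).add_const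
      ((m1:ℝ)-(m0:ℝ))).const_mul (1/4 : ℝ)
    refine this.congr_deriv ?_
    ring
  have hWd : ∀ z, HasDerivAt W (W' z) z := by
    intro z
    have h1 : HasDerivAt (fun t => (1/2) * (r' t)^2)
        ((1/2) * (2 * r' z ^ 1 * (α z * r' z - β z * Real.sin (2 * r z)))) z :=
      ((hr' z).pow 2).const_mul (1/2 : ℝ)
    have hsin : HasDerivAt (fun t => (Real.sin (r t))^2)
        (2 * Real.sin (r z) ^ 1 * (Real.cos (r z) * r' z)) z :=
      (((Real.hasDerivAt_sin (r z)).comp z (hr z)).pow 2)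
    have h2 := (hβd z).mul hsin
    have := h1.add h2
    refine this.congr_deriv ?_
    rw [Real.sin_two_mul]
    ring
  have hW'0 : ∀ z, artanh y ≤ z → 0 ≤ W' z := by
    intro z hz
    have h1 : (0:ℝ) ≤ α z * (r' z)^2 := mul_nonneg (hα0 z hz) (sq_nonneg _)
    have h2 : (0:ℝ) ≤ (1/4)*((m0:ℝ)+(m1:ℝ)) * (1/(Real.cosh z)^2) * (Real.sin (r z))^2 := by
      have := Real.cosh_pos (x := z)
      positivity
    simp only [hW']
    linarith
  have hmono : MonotoneOn W (Set.Ici (artanh y)) := by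
    apply monotoneOn_of_hasDerivWithinAt_nonneg (convex_Ici _)
      (fun z _ => (hWd z).continuousAt.continuousWithinAt)
      (fun z _ => (hWd z).hasDerivWithinAt.mono interior_subset)
    intro z hz
    rw [interior_Ici] at hz
    exact hW'0 z (le_of_lt hz)
  -- limit of W at infinity
  have hβlim : Tendsto β atTop (nhds ((m1:ℝ)/2)) := by
    rw [hβfun]
    have h : Tendsto (fun t : ℝ => (1/4) * (((m0:ℝ) + m1) * Real.tanh t + ((m1:ℝ) - m0)))
        atTop (nhds ((1/4) * (((m0:ℝ) + m1) * 1 + ((m1:ℝ) - m0)))) :=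
      (((tendsto_tanh_atTop.const_mul _).add_const _).const_mul _)
    convert h using 2
    ring
  have hsinlim : Tendsto (fun z => (Real.sin (r z))^2) atTop (nhds 1) := by
    have hc : Continuous fun u : ℝ => (Real.sin u)^2 := (Real.continuous_sin).pow 2
    have h := (hc.tendsto _).comp hlim
    have hcos : Real.cos ((2 * (ℓ:ℝ) + 1) * Real.pi / 2) = 0 :=
      Real.cos_eq_zero_iff.mpr ⟨ℓ, by norm_num⟩
    have hs : (Real.sin ((2 * (ℓ:ℝ) + 1) * Real.pi / 2))^2 = 1 := by
      have := Real.sin_sq_add_cos_sq ((2 * (ℓ:ℝ) + 1) * Real.pi / 2)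
      rw [hcos] at this
      nlinarith
    rw [show (fun u : ℝ => (Real.sin u)^2) ∘ r = fun z => (Real.sin (r z))^2 from rfl, hs] at h
    exact h
  have hWlim : Tendsto W atTop (nhds ((m1:ℝ)/2)) := by
    have h1 : Tendsto (fun z => (1/2) * (r' z)^2) atTop (nhds ((1/2) * 0^2)) :=
      ((hlim'.pow 2).const_mul _)
    have h2 := hβlim.mul hsinlim
    have := h1.add h2
    simp only [hW]
    convert this using 2
    norm_num
  -- conclude
  have hxW : W x ≤ (m1:ℝ)/2 := by
    apply ge_of_tendsto hWlim
    filter_upwards [eventually_ge_atTop x] with z hz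
    exact hmono hx (le_trans hx hz) hz
  have hlow : (1/2) * (r' x)^2 ≤ W x := by
    have := mul_nonneg (hβ0 x hx) (sq_nonneg (Real.sin (r x)))
    simp only [hW]
    linarith
  have hsq : (r' x)^2 ≤ (m1:ℝ) := by linarith
  exact Real.abs_le_sqrt hsq
end

section
/- Let m0 ≥ 1, m1 ≥ 1 and let r solve the (m0,m1)-ODE. Define V(x) = (1/2)·r'(x)² - β(x)·cos²(r(x)). Then V'(x) = α(x)·r'(x)² - ((m0+m1)/(4·cosh²x))·cos²(r(x)); in particular V is monotone nonincreasing on (-∞, Z_α] when m0 ≥ 2, where Z_α is the unique zero of α. -/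
lemma hasDerivAt_tanh' (x : ℝ) :
    HasDerivAt Real.tanh (1 / Real.cosh x ^ 2) x := by
  have h : Real.tanh = fun y => Real.sinh y / Real.cosh y :=
    funext fun y => Real.tanh_eq_sinh_div_cosh y
  rw [h]
  have hc := (Real.cosh_pos x).ne'
  have := (Real.hasDerivAt_sinh x).div (Real.hasDerivAt_cosh x) hc
  refine this.congr_deriv ?_
  have h2 := Real.cosh_sq_sub_sinh_sq x
  rw [div_left_inj' (pow_ne_zero 2 hc)]
  nlinarith [h2]

lemma tanh_strictMono : StrictMono Real.tanh := by
  apply strictMono_of_deriv_pos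
  intro x
  rw [(hasDerivAt_tanh' x).deriv]
  positivity

lemma tanh_artanh {t : ℝ} (h1 : -1 < t) (h2 : t < 1) :
    Real.tanh (artanh t) = t := by
  have hu : (0:ℝ) < (1 + t) / (1 - t) := by
    apply div_pos <;> linarith
  have hE : Real.exp (2 * artanh t) = (1 + t) / (1 - t) := by
    have : 2 * artanh t = Real.log ((1 + t) / (1 - t)) := by
      unfold artanh; ring
    rw [this, Real.exp_log hu]
  have hE2 : Real.exp (artanh t) ^ 2 = (1 + t) / (1 - t) := by
    rw [← hE, ← Real.exp_nat_mul]; norm_num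
  have hEpos := Real.exp_pos (artanh t)
  rw [Real.tanh_eq_sinh_div_cosh, Real.sinh_eq, Real.cosh_eq, Real.exp_neg]
  set E := Real.exp (artanh t)
  have hden : (0:ℝ) < 1 - t := by linarith
  field_simp at hE2 ⊢
  nlinarith [hE2, hEpos]

/-- Derivative formula for V(x) = (1/2)r'(x)² - β(x)cos²(r(x)):
V'(x) = α(x)r'(x)² - ((m0+m1)/(4cosh²x))cos²(r(x)); for m0 ≥ 2, V is
nonincreasing on (-∞, Z_α]. -/
theorem lyapunov_V_deriv_and_antitone (m0 m1 : ℕ) (hm0 : 1 ≤ m0) (hm1 : 1 ≤ m1)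
    (α β : ℝ → ℝ)
    (hα : ∀ x, α x = (1/2) * (((m0:ℝ) + m1 - 2) * Real.tanh x + m1 - m0))
    (hβ : ∀ x, β x = (1/4) * (((m0:ℝ) + m1) * Real.tanh x + m1 - m0))
    (r r' : ℝ → ℝ)
    (hr : ∀ x, HasDerivAt r (r' x) x)
    (hr' : ∀ x, HasDerivAt r' (α x * r' x - β x * Real.sin (2 * r x)) x) :
    (∀ x, HasDerivAt (fun y => (1/2) * (r' y)^2 - β y * (Real.cos (r y))^2)
      (α x * (r' x)^2 - (((m0:ℝ) + m1) / (4 * (Real.cosh x)^2)) * (Real.cos (r x))^2) x) ∧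
    (2 ≤ m0 → AntitoneOn (fun y => (1/2) * (r' y)^2 - β y * (Real.cos (r y))^2)
      (Set.Iic (artanh (((m0:ℝ) - m1) / ((m0:ℝ) + m1 - 2))))) := by
  have hβf : β = fun x => (1/4) * (((m0:ℝ) + m1) * Real.tanh x + m1 - m0) := funext hβ
  have hV : ∀ x, HasDerivAt (fun y => (1/2) * (r' y)^2 - β y * (Real.cos (r y))^2)
      (α x * (r' x)^2 - (((m0:ℝ) + m1) / (4 * (Real.cosh x)^2)) * (Real.cos (r x))^2) x := by
    intro x
    have hc := (Real.cosh_pos x).ne'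
    have hβd : HasDerivAt β ((((m0:ℝ) + m1) / (4 * (Real.cosh x)^2))) x := by
      rw [hβf]
      have h1 : HasDerivAt (fun y => (1/4) * (((m0:ℝ) + m1) * Real.tanh y + ↑m1 - ↑m0))
          ((1/4) * (((m0:ℝ) + m1) * (1 / Real.cosh x ^ 2))) x :=
        ((((hasDerivAt_tanh' x).const_mul (((m0:ℝ) + m1))).add_const (m1:ℝ)).sub_const
          (m0:ℝ)).const_mul (1/4)
      convert h1 using 1
      field_simp
    have hsq : HasDerivAt (fun y => (1/2) * (r' y)^2)
        ((1/2) * (2 * r' x ^ 1 * (α x * r' x - β x * Real.sin (2 * r x)))) x :=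
      ((hr' x).pow 2).const_mul (1/2)
    have hcos : HasDerivAt (fun y => (Real.cos (r y))^2)
        (2 * Real.cos (r x) ^ 1 * (-Real.sin (r x) * r' x)) x :=
      (((Real.hasDerivAt_cos (r x)).comp x (hr x)).pow 2)
    have := hsq.sub (hβd.mul hcos)
    refine this.congr_deriv ?_
    rw [Real.sin_two_mul]
    ring
  refine ⟨hV, fun hm2 => ?_⟩
  set Z := artanh (((m0:ℝ) - m1) / ((m0:ℝ) + m1 - 2)) with hZ
  have hαle : ∀ x ≤ Z, α x ≤ 0 := by
    intro x hx
    rw [hα]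
    have hc2 : (1:ℝ) ≤ (m0:ℝ) + m1 - 2 := by
      have : (2:ℝ) ≤ m0 := by exact_mod_cast hm2
      have : (1:ℝ) ≤ m1 := by exact_mod_cast hm1
      push_cast
      linarith [show (2:ℝ) ≤ m0 from by exact_mod_cast hm2]
    have key : ((m0:ℝ) + m1 - 2) * Real.tanh x + m1 - m0 ≤ 0 := by
      rcases eq_or_lt_of_le hm1 with h1 | h1
      · -- m1 = 1, then Z = artanh 1 = 0 (junk), tanh x ≤ 0
        have hm1' : (m1:ℝ) = 1 := by exact_mod_cast h1.symm
        have hZ0 : Z = 0 := by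
          rw [hZ, hm1']
          have hne : (m0:ℝ) + 1 - 2 = (m0:ℝ) - 1 := by ring
          rw [hne, div_self (by
            have : (2:ℝ) ≤ m0 := by exact_mod_cast hm2
            linarith)]
          unfold artanh
          norm_num
        have hx0 : x ≤ 0 := hZ0 ▸ hx
        have ht : Real.tanh x ≤ 0 := by
          have := tanh_strictMono.monotone hx0
          simpa [Real.tanh_eq_sinh_div_cosh] using this
        have hm0' : (1:ℝ) ≤ m0 := by exact_mod_cast hm0
        nlinarith
      · -- m1 ≥ 2
        have hm1' : (2:ℝ) ≤ m1 := by exact_mod_cast h1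
        have hm0' : (2:ℝ) ≤ m0 := by exact_mod_cast hm2
        set t : ℝ := ((m0:ℝ) - m1) / ((m0:ℝ) + m1 - 2) with ht
        have h1t : -1 < t := by
          rw [ht, lt_div_iff₀ (by linarith)]
          linarith
        have h2t : t < 1 := by
          rw [ht, div_lt_one (by linarith)]
          linarith
        have htZ : Real.tanh Z = t := tanh_artanh h1t h2t
        have hle : Real.tanh x ≤ t := htZ ▸ tanh_strictMono.monotone hx
        have : ((m0:ℝ) + m1 - 2) * Real.tanh x ≤ ((m0:ℝ) + m1 - 2) * t := by
          apply mul_le_mul_of_nonneg_left hle (by linarith)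
        have htt : ((m0:ℝ) + m1 - 2) * t = (m0:ℝ) - m1 := by
          rw [ht]; field_simp
        linarith [htt ▸ this]
    linarith
  apply antitoneOn_of_deriv_nonpos (convex_Iic Z)
  · exact fun x _ => (hV x).differentiableAt.continuousAt.continuousWithinAt
  · exact fun x _ => (hV x).differentiableAt.differentiableWithinAt
  · intro x hx
    rw [interior_Iic] at hx
    rw [(hV x).deriv]
    have h1 : α x * (r' x)^2 ≤ 0 :=
      mul_nonpos_of_nonpos_of_nonneg (hαle x hx.le) (sq_nonneg _)
    have h2 : (0:ℝ) ≤ (((m0:ℝ) + m1) / (4 * (Real.cosh x)^2)) * (Real.cos (r x))^2 := by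
      apply mul_nonneg
      · apply div_nonneg (by positivity) (by positivity)
      · exact sq_nonneg _
    linarith
end
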